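/- With the 3-SAT construction of π_1, π_2 as described, there exist natural numbers z_1, z_2 such that π_1^{z_1} π_2^{z_2} is fixpoint-free if and only if there exists a natural number z such that π_1 π_2^{z} is fixpoint-free (i.e. the exponent of π_1 can always be taken equal to 1, so the group ⟨π_1, π_2⟩ contains a fixpoint-free element if and only if the coset π_1⟨π_2⟩ does). -/

import Mathlib

/-! 3-SAT construction.  Variables are `x_1, …, x_n`, indexed by `Fin n`; the `j`-th clause is
`C_j = {x̃_{idx j 0}, x̃_{idx j 1}, x̃_{idx j 2}}` with `idx j` strictly monotone, where the
literal on variable `idx j a` is negated iff `neg j a = true`.  The first `2n` primes are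
`p_1, …, p_n, p̄_1, …, p̄_n` with `p_i = P (i-1)` and `p̄_i = P (n+i-1)` for the enumeration
`P` of the primes (`P 0 = 2`).  Every `Sym(ℓ)`-component is realized on `Fin ℓ`, and the
`ℓ`-cycle `([ℓ]) = (1,2,…,ℓ)` is realized as `finRotate ℓ`.  Fixpoint-freeness is checked on
the disjoint union of all components. -/

namespace SatConstruction

/-- `P i` is the `(i+1)`-st prime: `P 0 = 2`, `P 1 = 3`, ….  The prime `p_i` associated with
the positive literal `x_i` is `P (i-1)` and the prime `p̄_i` associated with the negative
literal `x̄_i` is `P (n+i-1)` (with `i ∈ [n]` one-indexed). -/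
noncomputable def P (i : ℕ) : ℕ := Nat.nth Nat.Prime i

/-- `p̃` of a literal: the prime of the underlying variable, according to the sign. -/
noncomputable def ptil (n : ℕ) {m : ℕ} (idx : Fin m → Fin 3 → Fin n)
    (neg : Fin m → Fin 3 → Bool) (j : Fin m) (a : Fin 3) : ℕ :=
  if neg j a then P (n + (idx j a).val) else P (idx j a).val

/-- `r_j = p̃_{i_1} p̃_{i_2} p̃_{i_3}` for the clause `C_j`. -/
noncomputable def r (n : ℕ) {m : ℕ} (idx : Fin m → Fin 3 → Fin n)
    (neg : Fin m → Fin 3 → Bool) (j : Fin m) : ℕ :=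
  ptil n idx neg j 0 * ptil n idx neg j 1 * ptil n idx neg j 2

/-- The underlying set of the group
`G = ∏_{i=1}^n (Sym(p_i) × Sym(p̄_i) × Sym(p_i p̄_i)^{(p_i-1)(p̄_i-1)+1}) × ∏_{j=1}^m Sym(r_j)`
(embedded in a symmetric group).  The `(p_i-1)(p̄_i-1)+1` copies of `Sym(p_i p̄_i)` are
indexed by `Option (Fin (p_i - 1) × Fin (p̄_i - 1))`: `none` is the component of `α_{i,3}`
and `some (l-1, k-1)` is the component of `α_{i,l,k}`. -/
abbrev Omega (n : ℕ) {m : ℕ} (idx : Fin m → Fin 3 → Fin n)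
    (neg : Fin m → Fin 3 → Bool) : Type :=
  (Σ i : Fin n,
      (Fin (P i.val) ⊕ Fin (P (n + i.val))) ⊕
        (Σ _c : Option (Fin (P i.val - 1) × Fin (P (n + i.val) - 1)),
          Fin (P i.val * P (n + i.val)))) ⊕
    (Σ j : Fin m, Fin (r n idx neg j))

/-- `π_1 = (α_1,…,α_n,β_1,…,β_m)` with
`α_i = (α_{i,1}, α_{i,2}, α_{i,3}, α_{i,1,1}, …, α_{i,p_i-1,p̄_i-1})`,
`α_{i,1} = ([p_i])`, `α_{i,2} = ([p̄_i])`, `α_{i,3} = id`,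
`α_{i,l,k} = ([p_i p̄_i])^{s_{i,l,k}}` and `β_j = id`. -/
noncomputable def pi1 (n : ℕ) {m : ℕ} (idx : Fin m → Fin 3 → Fin n)
    (neg : Fin m → Fin 3 → Bool) (s : Fin n → ℕ → ℕ → ℕ) :
    Equiv.Perm (Omega n idx neg) :=
  Equiv.sumCongr
    (Equiv.sigmaCongrRight fun i =>
      Equiv.sumCongr
        (Equiv.sumCongr (finRotate _) (finRotate _))
        (Equiv.sigmaCongrRight fun c =>
          match c with
          | none => Equiv.refl _
          | some (l, k) =>
              finRotate (P i.val * P (n + i.val)) ^ s i (l.val + 1) (k.val + 1)))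
    (Equiv.refl _)

/-- `π_2 = (γ_1,…,γ_n,δ_1,…,δ_m)` with
`γ_i = (γ_{i,1}, γ_{i,2}, γ_{i,3}, γ_{i,1,1}, …, γ_{i,p_i-1,p̄_i-1})`,
`γ_{i,1} = γ_{i,2} = id`, `γ_{i,3} = γ_{i,l,k} = ([p_i p̄_i])` and `δ_j = ([r_j])`. -/
noncomputable def pi2 (n : ℕ) {m : ℕ} (idx : Fin m → Fin 3 → Fin n)
    (neg : Fin m → Fin 3 → Bool) :
    Equiv.Perm (Omega n idx neg) :=
  Equiv.sumCongr
    (Equiv.sigmaCongrRight fun _i =>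
      Equiv.sumCongr (Equiv.refl _) (Equiv.sigmaCongrRight fun _c => finRotate _))
    (Equiv.sigmaCongrRight fun j => finRotate (r n idx neg j))

lemma sumCongr_pow_apply_inl {α β : Type*} (e : Equiv.Perm α) (f : Equiv.Perm β) (k : ℕ) (x : α) :
    ((Equiv.sumCongr e f) ^ k) (Sum.inl x) = Sum.inl ((e ^ k) x) := by
  induction k generalizing x with
  | zero => simp
  | succ k ih => simp [pow_succ, Equiv.Perm.mul_apply, ih]

lemma sumCongr_pow_apply_inr {α β : Type*} (e : Equiv.Perm α) (f : Equiv.Perm β) (k : ℕ) (x : β) :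
    ((Equiv.sumCongr e f) ^ k) (Sum.inr x) = Sum.inr ((f ^ k) x) := by
  induction k generalizing x with
  | zero => simp
  | succ k ih => simp [pow_succ, Equiv.Perm.mul_apply, ih]

lemma sigmaCongrRight_pow_apply {α : Type*} {β : α → Type*} (F : ∀ a, Equiv.Perm (β a)) (k : ℕ)
    (i : α) (x : β i) :
    ((Equiv.sigmaCongrRight F) ^ k) ⟨i, x⟩ = ⟨i, (F i ^ k) x⟩ := by
  induction k generalizing x with
  | zero => simp
  | succ k ih => simp [pow_succ, Equiv.Perm.mul_apply, ih]

lemma refl_pow {α : Type*} (k : ℕ) : (Equiv.refl α) ^ k = Equiv.refl α := by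
  rw [← Equiv.Perm.one_def, one_pow]

variable {n m : ℕ} {idx : Fin m → Fin 3 → Fin n} {neg : Fin m → Fin 3 → Bool}
  {s : Fin n → ℕ → ℕ → ℕ} {z1 z2 : ℕ}

lemma eval1 (i : Fin n) (x : Fin (P i.val)) :
    (pi1 n idx neg s ^ z1 * pi2 n idx neg ^ z2) (Sum.inl ⟨i, Sum.inl (Sum.inl x)⟩)
      = Sum.inl ⟨i, Sum.inl (Sum.inl ((finRotate (P i.val) ^ z1) x))⟩ := by
  simp [pi1, pi2, Equiv.Perm.mul_apply, sumCongr_pow_apply_inl, sumCongr_pow_apply_inr,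
    sigmaCongrRight_pow_apply, refl_pow]

lemma eval2 (i : Fin n) (x : Fin (P (n + i.val))) :
    (pi1 n idx neg s ^ z1 * pi2 n idx neg ^ z2) (Sum.inl ⟨i, Sum.inl (Sum.inr x)⟩)
      = Sum.inl ⟨i, Sum.inl (Sum.inr ((finRotate (P (n + i.val)) ^ z1) x))⟩ := by
  simp [pi1, pi2, Equiv.Perm.mul_apply, sumCongr_pow_apply_inl, sumCongr_pow_apply_inr,
    sigmaCongrRight_pow_apply, refl_pow]

lemma eval3 (i : Fin n) (x : Fin (P i.val * P (n + i.val))) :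
    (pi1 n idx neg s ^ z1 * pi2 n idx neg ^ z2) (Sum.inl ⟨i, Sum.inr ⟨none, x⟩⟩)
      = Sum.inl ⟨i, Sum.inr ⟨none, (finRotate (P i.val * P (n + i.val)) ^ z2) x⟩⟩ := by
  simp [pi1, pi2, Equiv.Perm.mul_apply, sumCongr_pow_apply_inl, sumCongr_pow_apply_inr,
    sigmaCongrRight_pow_apply, refl_pow]

lemma eval4 (i : Fin n) (l : Fin (P i.val - 1)) (k : Fin (P (n + i.val) - 1))
    (x : Fin (P i.val * P (n + i.val))) :
    (pi1 n idx neg s ^ z1 * pi2 n idx neg ^ z2) (Sum.inl ⟨i, Sum.inr ⟨some (l, k), x⟩⟩)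
      = Sum.inl ⟨i, Sum.inr ⟨some (l, k),
          (finRotate (P i.val * P (n + i.val)) ^ (s i (l.val + 1) (k.val + 1) * z1 + z2)) x⟩⟩ := by
  simp only [pi1, pi2, Equiv.Perm.mul_apply, sumCongr_pow_apply_inl, sumCongr_pow_apply_inr,
    sigmaCongrRight_pow_apply, refl_pow]
  rw [← pow_mul, ← Equiv.Perm.mul_apply, ← pow_add]

lemma eval5 (j : Fin m) (x : Fin (r n idx neg j)) :
    (pi1 n idx neg s ^ z1 * pi2 n idx neg ^ z2) (Sum.inr ⟨j, x⟩)
      = Sum.inr ⟨j, (finRotate (r n idx neg j) ^ z2) x⟩ := by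
  simp [pi1, pi2, Equiv.Perm.mul_apply, sumCongr_pow_apply_inl, sumCongr_pow_apply_inr,
    sigmaCongrRight_pow_apply, refl_pow]


open Fin.NatCast in
lemma finRotate_pow_apply (n k : ℕ) (x : Fin (n + 1)) :
    (finRotate (n + 1) ^ k) x = x + (k : Fin (n + 1)) := by
  induction k generalizing x with
  | zero => simp
  | succ k ih =>
    rw [pow_succ', Equiv.Perm.mul_apply, ih, finRotate_succ_apply, Nat.cast_add, Nat.cast_one,
      add_assoc]

open Fin.NatCast in
lemma finRotate_pow_fix_iff {ℓ : ℕ} (hl : 0 < ℓ) (k : ℕ) (x : Fin ℓ) :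
    (finRotate ℓ ^ k) x = x ↔ ℓ ∣ k := by
  cases ℓ with
  | zero => omega
  | succ n => rw [finRotate_pow_apply, add_eq_left, Fin.natCast_eq_zero]

lemma hP (t : ℕ) : (P t).Prime := Nat.prime_nth_prime t

lemma hPmono : StrictMono P :=
  fun _ _ hab => (Nat.nth_lt_nth Nat.infinite_setOf_prime).mpr hab

lemma hPinj : Function.Injective P := hPmono.injective

lemma hPcop {a b : ℕ} (hab : a ≠ b) : Nat.Coprime (P a) (P b) :=
  (Nat.coprime_primes (hP a) (hP b)).mpr fun he => hab (hPinj he)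

lemma ptil_pos (j : Fin m) (a : Fin 3) : 0 < ptil n idx neg j a := by
  unfold ptil; split <;> exact (hP _).pos


/-- There are `z_1, z_2` such that `π_1^{z_1} π_2^{z_2}` is fixpoint-free if and only if
there is a `z` such that `π_1 π_2^{z}` is fixpoint-free: the exponent of `π_1` can always be
taken to be `1`, so the group `⟨π_1, π_2⟩` contains a fixpoint-free element iff the coset
`π_1⟨π_2⟩` does. -/
theorem fixpointFree_iff_coset
    (n m : ℕ) (idx : Fin m → Fin 3 → Fin n) (hidx : ∀ j, StrictMono (idx j))
    (neg : Fin m → Fin 3 → Bool)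
    (s : Fin n → ℕ → ℕ → ℕ)
    -- `s_{i,l,k}` is the unique number in `[0, p_i p̄_i - 1]` with `s_{i,l,k} ≡ l (mod p_i)`
    -- and `s_{i,l,k} ≡ k (mod p̄_i)`, for `l ∈ [p_i - 1]` and `k ∈ [p̄_i - 1]`
    (hs : ∀ i : Fin n, ∀ l k : ℕ, 1 ≤ l → l < P i.val → 1 ≤ k → k < P (n + i.val) →
      s i l k < P i.val * P (n + i.val) ∧
        s i l k % P i.val = l ∧ s i l k % P (n + i.val) = k)
    :
    (∃ z1 z2 : ℕ, ∀ a : Omega n idx neg,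
        (pi1 n idx neg s ^ z1 * pi2 n idx neg ^ z2) a ≠ a) ↔
      ∃ z : ℕ, ∀ a : Omega n idx neg,
        (pi1 n idx neg s * pi2 n idx neg ^ z) a ≠ a := by
  constructor
  · rintro ⟨z1, z2, h⟩
    -- extract the five divisibility conditions
    have c1 : ∀ i : Fin n, ¬ P i.val ∣ z1 := fun i hdvd =>
      h (Sum.inl ⟨i, Sum.inl (Sum.inl ⟨0, (hP _).pos⟩)⟩)
        (by rw [eval1, (finRotate_pow_fix_iff (hP _).pos z1 _).mpr hdvd])
    have c2 : ∀ i : Fin n, ¬ P (n + i.val) ∣ z1 := fun i hdvd =>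
      h (Sum.inl ⟨i, Sum.inl (Sum.inr ⟨0, (hP _).pos⟩)⟩)
        (by rw [eval2, (finRotate_pow_fix_iff (hP _).pos z1 _).mpr hdvd])
    have c3 : ∀ i : Fin n, ¬ P i.val * P (n + i.val) ∣ z2 := fun i hdvd =>
      h (Sum.inl ⟨i, Sum.inr ⟨none, ⟨0, mul_pos (hP _).pos (hP _).pos⟩⟩⟩)
        (by rw [eval3, (finRotate_pow_fix_iff (mul_pos (hP _).pos (hP _).pos) z2 _).mpr hdvd])
    have c4 : ∀ i : Fin n, ∀ l : Fin (P i.val - 1), ∀ k : Fin (P (n + i.val) - 1),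
        ¬ P i.val * P (n + i.val) ∣ s i (l.val + 1) (k.val + 1) * z1 + z2 := fun i l k hdvd =>
      h (Sum.inl ⟨i, Sum.inr ⟨some (l, k), ⟨0, mul_pos (hP _).pos (hP _).pos⟩⟩⟩)
        (by rw [eval4, (finRotate_pow_fix_iff (mul_pos (hP _).pos (hP _).pos) _ _).mpr hdvd])
    have rpos : ∀ j : Fin m, 0 < r n idx neg j := fun j =>
      mul_pos (mul_pos (ptil_pos j 0) (ptil_pos j 1)) (ptil_pos j 2)
    have c5 : ∀ j : Fin m, ¬ r n idx neg j ∣ z2 := fun j hdvd =>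
      h (Sum.inr ⟨j, ⟨0, rpos j⟩⟩)
        (by rw [eval5, (finRotate_pow_fix_iff (rpos j) z2 _).mpr hdvd])
    -- set up the CRT modulus and the solution z
    set M := ∏ t ∈ Finset.range (2 * n), P t with hM
    have hM0 : 0 < M := Finset.prod_pos fun t _ => (hP t).pos
    haveI : NeZero M := ⟨hM0.ne'⟩
    have hz1cop : ∀ t, t < 2 * n → ¬ P t ∣ z1 := by
      intro t ht
      rcases lt_or_ge t n with h1 | h1
      · exact c1 ⟨t, h1⟩
      · have he : t = n + (t - n) := by omega
        rw [he]; exact c2 ⟨t - n, by omega⟩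
    have hcop : Nat.Coprime z1 M :=
      Nat.Coprime.prod_right fun t ht =>
        ((hP t).coprime_iff_not_dvd.mpr (hz1cop t (Finset.mem_range.mp ht))).symm
    obtain ⟨z, hzM⟩ : ∃ z, z1 * z ≡ z2 [MOD M] := by
      refine ⟨(((z1 : ZMod M))⁻¹ * (z2 : ZMod M)).val, ?_⟩
      have h1 : ((z1 * (((z1 : ZMod M))⁻¹ * (z2 : ZMod M)).val : ℕ) : ZMod M)
          = ((z2 : ℕ) : ZMod M) := by
        push_cast
        rw [ZMod.natCast_rightInverse _, ← mul_assoc, ZMod.coe_mul_inv_eq_one z1 hcop, one_mul]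
      exact (ZMod.natCast_eq_natCast_iff _ _ _).mp h1
    have hmod : ∀ t, t < 2 * n → z1 * z ≡ z2 [MOD P t] := fun t ht =>
      Nat.ModEq.of_dvd (Finset.dvd_prod_of_mem P (Finset.mem_range.mpr ht)) hzM
    have hz2 : ∀ t, t < 2 * n → P t ∣ z → P t ∣ z2 := by
      intro t ht hz
      have h1 : z1 * z ≡ 0 [MOD P t] := Nat.modEq_zero_iff_dvd.mpr (hz.mul_left z1)
      exact Nat.modEq_zero_iff_dvd.mp ((hmod t ht).symm.trans h1)
    have hstep : ∀ t, t < 2 * n → ∀ s' : ℕ, P t ∣ s' + z → P t ∣ s' * z1 + z2 := by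
      intro t ht s' hdvd
      have h1 : z1 * (s' + z) ≡ 0 [MOD P t] := Nat.modEq_zero_iff_dvd.mpr (hdvd.mul_left z1)
      have h2 : z1 * s' + z1 * z ≡ z1 * s' + z2 [MOD P t] := (hmod t ht).add_left _
      have h3 : z1 * s' + z2 ≡ 0 [MOD P t] := h2.symm.trans (by rwa [mul_add] at h1)
      have h4 := Nat.modEq_zero_iff_dvd.mp h3
      rwa [mul_comm z1 s'] at h4
    refine ⟨z, ?_⟩
    intro a heq
    rw [← pow_one (pi1 n idx neg s)] at heq
    rcases a with (⟨i, ((x | x) | ⟨(_ | ⟨l, k⟩), x⟩)⟩ | ⟨j, x⟩)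
    · rw [eval1] at heq
      simp only [Sum.inl.injEq, Sum.inr.injEq, Sigma.mk.inj_iff, heq_eq_eq, true_and] at heq
      rw [finRotate_pow_fix_iff (hP _).pos] at heq
      exact (hP _).ne_one (Nat.dvd_one.mp heq)
    · rw [eval2] at heq
      simp only [Sum.inl.injEq, Sum.inr.injEq, Sigma.mk.inj_iff, heq_eq_eq, true_and] at heq
      rw [finRotate_pow_fix_iff (hP _).pos] at heq
      exact (hP _).ne_one (Nat.dvd_one.mp heq)
    · rw [eval3] at heq
      simp only [Sum.inl.injEq, Sum.inr.injEq, Sigma.mk.inj_iff, heq_eq_eq, true_and] at heq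
      rw [finRotate_pow_fix_iff (mul_pos (hP _).pos (hP _).pos)] at heq
      have hi := i.isLt
      exact c3 i ((hPcop (show i.val ≠ n + i.val by omega)).mul_dvd_of_dvd_of_dvd
        (hz2 _ (by omega) ((dvd_mul_right _ _).trans heq))
        (hz2 _ (by omega) ((dvd_mul_left _ _).trans heq)))
    · rw [eval4] at heq
      simp only [Sum.inl.injEq, Sum.inr.injEq, Sigma.mk.inj_iff, heq_eq_eq, true_and] at heq
      rw [finRotate_pow_fix_iff (mul_pos (hP _).pos (hP _).pos)] at heq
      rw [mul_one] at heq
      have hi := i.isLt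
      exact c4 i l k ((hPcop (show i.val ≠ n + i.val by omega)).mul_dvd_of_dvd_of_dvd
        (hstep _ (by omega) _ ((dvd_mul_right _ _).trans heq))
        (hstep _ (by omega) _ ((dvd_mul_left _ _).trans heq)))
    · rw [eval5] at heq
      simp only [Sum.inr.injEq, Sigma.mk.inj_iff, heq_eq_eq, true_and] at heq
      rw [finRotate_pow_fix_iff (rpos j)] at heq
      -- analyze the clause primes
      set t : Fin 3 → ℕ := fun a => if neg j a then n + (idx j a).val else (idx j a).val with htdef
      have hpt : ∀ a, ptil n idx neg j a = P (t a) := by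
        intro a
        by_cases hb : neg j a = true <;> simp [ptil, t, hb]
      have ht2n : ∀ a, t a < 2 * n := by
        intro a
        have := (idx j a).isLt
        dsimp [t]; split <;> omega
      have tne : ∀ a b : Fin 3, a ≠ b → t a ≠ t b := by
        intro a b hab
        have hvne : (idx j a).val ≠ (idx j b).val := fun hv =>
          hab ((hidx j).injective (Fin.ext hv))
        have ha := (idx j a).isLt
        have hb := (idx j b).isLt
        dsimp [t]; split <;> split <;> omega
      have hr : r n idx neg j = P (t 0) * P (t 1) * P (t 2) := by
        rw [r, hpt 0, hpt 1, hpt 2]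
      rw [hr] at heq
      have d0 : P (t 0) ∣ z2 := hz2 _ (ht2n 0)
        (((dvd_mul_right _ _).mul_right _).trans heq)
      have d1 : P (t 1) ∣ z2 := hz2 _ (ht2n 1)
        (((dvd_mul_left _ _).mul_right _).trans heq)
      have d2 : P (t 2) ∣ z2 := hz2 _ (ht2n 2) ((dvd_mul_left _ _).trans heq)
      refine c5 j ?_
      rw [hr]
      have d01 : P (t 0) * P (t 1) ∣ z2 :=
        (hPcop (tne 0 1 (by decide))).mul_dvd_of_dvd_of_dvd d0 d1
      exact ((hPcop (tne 0 2 (by decide))).mul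
        (hPcop (tne 1 2 (by decide)))).mul_dvd_of_dvd_of_dvd d01 d2
  · rintro ⟨z, hz⟩
    exact ⟨1, z, by simpa only [pow_one] using hz⟩


end SatConstruction
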